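/- Let f(r) = -k r²/l² + b - 2m/r + q²/r² and suppose r₀ > 0 satisfies b r₀² - 3 m r₀ + 2 q² = 0. Then (f(r)/r²)''|_{r=r₀} has the opposite sign of 2 b r₀ - 3 m; in particular, the photon surface is stable iff 2 b r₀ - 3 m < 0 and unstable iff 2 b r₀ - 3 m > 0. -/

import Mathlib

private lemma cps_hd1 (k l b m q x : ℝ) (hx : x ≠ 0) :
    HasDerivAt (fun r : ℝ =>
        (-(k / l ^ 2) * r ^ 2 + b - 2 * m / r + q ^ 2 / r ^ 2) / r ^ 2)
      (-2 * b / x ^ 3 + 6 * m / x ^ 4 - 4 * q ^ 2 / x ^ 5) x := by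
  have hx2 : x ^ 2 ≠ 0 := pow_ne_zero _ hx
  have hpow : HasDerivAt (fun r : ℝ => r ^ 2) (2 * x) x := by
    simpa using hasDerivAt_pow 2 x
  have hA : HasDerivAt (fun r : ℝ => -(k / l ^ 2) * r ^ 2) (-(k / l ^ 2) * (2 * x)) x :=
    hpow.const_mul _
  have hC : HasDerivAt (fun r : ℝ => 2 * m / r)
      ((0 * x - 2 * m * 1) / x ^ 2) x :=
    (hasDerivAt_const x (2 * m)).div (hasDerivAt_id x) hx
  have hD : HasDerivAt (fun r : ℝ => q ^ 2 / r ^ 2)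
      ((0 * x ^ 2 - q ^ 2 * (2 * x)) / (x ^ 2) ^ 2) x :=
    (hasDerivAt_const x (q ^ 2)).div hpow hx2
  have hnum : HasDerivAt (fun r : ℝ => -(k / l ^ 2) * r ^ 2 + b - 2 * m / r + q ^ 2 / r ^ 2)
      (-(k / l ^ 2) * (2 * x) + 0 - (0 * x - 2 * m * 1) / x ^ 2
        + (0 * x ^ 2 - q ^ 2 * (2 * x)) / (x ^ 2) ^ 2) x :=
    ((hA.add (hasDerivAt_const x b)).sub hC).add hD
  have := hnum.div hpow hx2
  refine this.congr_deriv ?_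
  field_simp
  ring

private lemma cps_hd2 (b m q x : ℝ) (hx : x ≠ 0) :
    HasDerivAt (fun r : ℝ => -2 * b / r ^ 3 + 6 * m / r ^ 4 - 4 * q ^ 2 / r ^ 5)
      (6 * b / x ^ 4 - 24 * m / x ^ 5 + 20 * q ^ 2 / x ^ 6) x := by
  have h3 : HasDerivAt (fun r : ℝ => r ^ 3) (3 * x ^ 2) x := by
    simpa using hasDerivAt_pow 3 x
  have h4 : HasDerivAt (fun r : ℝ => r ^ 4) (4 * x ^ 3) x := by
    simpa using hasDerivAt_pow 4 x
  have h5 : HasDerivAt (fun r : ℝ => r ^ 5) (5 * x ^ 4) x := by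
    simpa using hasDerivAt_pow 5 x
  have hA := (hasDerivAt_const x (-2 * b)).div h3 (pow_ne_zero 3 hx)
  have hB := (hasDerivAt_const x (6 * m)).div h4 (pow_ne_zero 4 hx)
  have hC := (hasDerivAt_const x (4 * q ^ 2)).div h5 (pow_ne_zero 5 hx)
  have := (hA.add hB).sub hC
  refine this.congr_deriv ?_
  field_simp
  ring

/-- C-metric photon surface stability: at a radius `r₀ > 0` with
`b r₀² - 3 m r₀ + 2 q² = 0`, the second derivative of `r ↦ f r / r²` has the
opposite sign of `2 b r₀ - 3 m`. -/
theorem cmetric_photon_surface_stability (k l b m q : ℝ) (hl : l ≠ 0)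
    (r₀ : ℝ) (hr₀ : 0 < r₀) (hps : b * r₀ ^ 2 - 3 * m * r₀ + 2 * q ^ 2 = 0) :
    (0 < deriv (deriv (fun r : ℝ =>
        (-(k / l ^ 2) * r ^ 2 + b - 2 * m / r + q ^ 2 / r ^ 2) / r ^ 2)) r₀
      ↔ 2 * b * r₀ - 3 * m < 0) ∧
    (deriv (deriv (fun r : ℝ =>
        (-(k / l ^ 2) * r ^ 2 + b - 2 * m / r + q ^ 2 / r ^ 2) / r ^ 2)) r₀ < 0
      ↔ 0 < 2 * b * r₀ - 3 * m) := by
  have hr : r₀ ≠ 0 := hr₀.ne'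
  have hev : deriv (fun r : ℝ =>
      (-(k / l ^ 2) * r ^ 2 + b - 2 * m / r + q ^ 2 / r ^ 2) / r ^ 2)
      =ᶠ[nhds r₀] (fun r : ℝ => -2 * b / r ^ 3 + 6 * m / r ^ 4 - 4 * q ^ 2 / r ^ 5) := by
    filter_upwards [eventually_ne_nhds hr] with x hx
    exact (cps_hd1 k l b m q x hx).deriv
  have h2 : deriv (deriv (fun r : ℝ =>
      (-(k / l ^ 2) * r ^ 2 + b - 2 * m / r + q ^ 2 / r ^ 2) / r ^ 2)) r₀
      = 6 * b / r₀ ^ 4 - 24 * m / r₀ ^ 5 + 20 * q ^ 2 / r₀ ^ 6 := by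
    rw [hev.deriv_eq]
    exact (cps_hd2 b m q r₀ hr).deriv
  have hval : deriv (deriv (fun r : ℝ =>
      (-(k / l ^ 2) * r ^ 2 + b - 2 * m / r + q ^ 2 / r ^ 2) / r ^ 2)) r₀
      = -2 * (2 * b * r₀ - 3 * m) / r₀ ^ 5 := by
    rw [h2]
    field_simp
    linear_combination 10 * hps
  have hp5 : (0:ℝ) < r₀ ^ 5 := by positivity
  rw [hval]
  constructor
  · rw [div_pos_iff]
    constructor
    · rintro (⟨h, -⟩ | ⟨-, h⟩)
      · linarith
      · linarith
    · intro h
      exact Or.inl ⟨by linarith, hp5⟩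
  · rw [div_neg_iff]
    constructor
    · rintro (⟨-, h⟩ | ⟨h, -⟩)
      · linarith
      · linarith
    · intro h
      exact Or.inr ⟨by linarith, hp5⟩
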